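/- Let k ≥ 1 and let d ∈ ℕ. For nonzero integers a, b, we have d ∣ gcd_k(a,b) if and only if d ∣ a and d^k ∣ b. -/

import Mathlib

noncomputable def gcdk (k : ℕ) (a b : ℤ) : ℕ :=
  sSup {d : ℕ | (d : ℤ) ∣ a ∧ (d : ℤ) ^ k ∣ b}

lemma lcm_pow_dvd_aux (d e k : ℕ) (hd : d ≠ 0) (he : e ≠ 0) :
    (Nat.lcm d e) ^ k ∣ Nat.lcm (d ^ k) (e ^ k) := by
  have hlcm : Nat.lcm d e ≠ 0 := Nat.lcm_ne_zero hd he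
  rcases Nat.eq_zero_or_pos k with rfl | hk
  · simp
  rw [← Nat.factorization_le_iff_dvd (pow_ne_zero _ hlcm)
      (Nat.lcm_ne_zero (pow_ne_zero _ hd) (pow_ne_zero _ he))]
  rw [Nat.factorization_pow, Nat.factorization_lcm hd he,
      Nat.factorization_lcm (pow_ne_zero _ hd) (pow_ne_zero _ he),
      Nat.factorization_pow, Nat.factorization_pow]
  intro p
  simp only [Finsupp.smul_apply, Finsupp.sup_apply, smul_eq_mul]
  rcases le_total (d.factorization p) (e.factorization p) with h | h <;>
    simp [Nat.max_eq_right, Nat.max_eq_left, h, Nat.mul_le_mul_left] <;> omega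

theorem stmt3 (k : ℕ) (hk : 1 ≤ k) (d : ℕ) (a b : ℤ) (ha : a ≠ 0) (hb : b ≠ 0) :
    d ∣ gcdk k a b ↔ (d : ℤ) ∣ a ∧ (d : ℤ) ^ k ∣ b := by
  set S : Set ℕ := {d : ℕ | (d : ℤ) ∣ a ∧ (d : ℤ) ^ k ∣ b} with hS
  have h1 : 1 ∈ S := by simp [hS]
  have hbdd : BddAbove S := by
    refine ⟨a.natAbs, fun x hx => ?_⟩
    exact Nat.le_of_dvd (Int.natAbs_pos.mpr ha) (Int.natCast_dvd.mp hx.1)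
  have hmem : gcdk k a b ∈ S := Nat.sSup_mem ⟨1, h1⟩ hbdd
  set M := gcdk k a b with hM
  have hMne : M ≠ 0 := by
    rintro h
    rw [h] at hmem
    simp only [hS, Set.mem_setOf_eq, Nat.cast_zero] at hmem
    rw [zero_pow (by omega)] at hmem
    exact hb (zero_dvd_iff.mp hmem.2)
  constructor
  · intro hdM
    refine ⟨dvd_trans (Int.natCast_dvd_natCast.mpr hdM) hmem.1, ?_⟩
    exact dvd_trans (pow_dvd_pow_of_dvd (Int.natCast_dvd_natCast.mpr hdM) k) hmem.2
  · rintro ⟨h1a, h2b⟩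
    have hdne : d ≠ 0 := by
      rintro rfl
      exact ha (zero_dvd_iff.mp (by simpa using h1a))
    have hlmem : Nat.lcm d M ∈ S := by
      constructor
      · rw [Int.natCast_dvd]
        exact Nat.lcm_dvd (Int.natCast_dvd.mp h1a) (Int.natCast_dvd.mp hmem.1)
      · have h1 : ((Nat.lcm d M : ℕ) : ℤ) ^ k ∣ ((Nat.lcm (d ^ k) (M ^ k) : ℕ) : ℤ) := by
          exact_mod_cast Int.natCast_dvd_natCast.mpr (lcm_pow_dvd_aux d M k hdne hMne)
        refine dvd_trans h1 ?_
        rw [Int.natCast_dvd]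
        refine Nat.lcm_dvd ?_ ?_
        · exact Int.natCast_dvd.mp (by exact_mod_cast h2b)
        · exact Int.natCast_dvd.mp (by exact_mod_cast hmem.2)
    have hle : Nat.lcm d M ≤ M := le_csSup hbdd hlmem
    have hMd : M ∣ Nat.lcm d M := Nat.dvd_lcm_right d M
    have : Nat.lcm d M = M :=
      le_antisymm hle (Nat.le_of_dvd (Nat.pos_of_ne_zero (Nat.lcm_ne_zero hdne hMne)) hMd)
    calc d ∣ Nat.lcm d M := Nat.dvd_lcm_left d M
      _ = M := this
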